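/- In a normed plane, if x, y, z are unit vectors with pairwise distinct directions satisfying x ⊣_B y, y ⊣_B z, z ⊣_B x, and z = θx + σy, then |θ| = |σ| = 1. -/

import Mathlib

open Module

variable {V : Type*} [NormedAddCommGroup V] [NormedSpace ℝ V]

noncomputable def sine {V : Type*} [NormedAddCommGroup V] [NormedSpace ℝ V] (x y : V) : ℝ :=
  ⨅ t : ℝ, ‖x + t • y‖

def BOrth {V : Type*} [NormedAddCommGroup V] [NormedSpace ℝ V] (x y : V) : Prop :=
  ∀ t : ℝ, ‖x‖ ≤ ‖x + t • y‖

noncomputable def cD (V : Type*) [NormedAddCommGroup V] [NormedSpace ℝ V] : ℝ :=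
  sInf {r : ℝ | ∃ x y : V, ‖x‖ = 1 ∧ ‖y‖ = 1 ∧ BOrth x y ∧ r = sine y x}

noncomputable def cR (V : Type*) [NormedAddCommGroup V] [NormedSpace ℝ V] : ℝ :=
  sSup {r : ℝ | ∃ x y : V, ‖x‖ = 1 ∧ ‖y‖ = 1 ∧ r = |sine x y - sine y x|}

theorem birkhoff_cycle_coeffs (hV : finrank ℝ V = 2) (x y z : V)
    (hx : ‖x‖ = 1) (hy : ‖y‖ = 1) (hz : ‖z‖ = 1)
    (hxy : ∀ c : ℝ, y ≠ c • x) (hyz : ∀ c : ℝ, z ≠ c • y) (hxz : ∀ c : ℝ, z ≠ c • x)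
    (hB1 : BOrth x y) (hB2 : BOrth y z) (hB3 : BOrth z x)
    (θ σ : ℝ) (hθ : θ ≠ 0) (hσ : σ ≠ 0) (hzrep : z = θ • x + σ • y) :
    |θ| = 1 ∧ |σ| = 1 := by
  -- 1 ≤ |σ| from z ⊣ x with t = -θ
  have h1 : (1:ℝ) ≤ |σ| := by
    have := hB3 (-θ)
    rw [hz, hzrep] at this
    have e : θ • x + σ • y + (-θ) • x = σ • y := by module
    rw [e, norm_smul, hy] at this
    simpa using this
  -- |σ| ≤ |θ| from y ⊣ z with t = -1/σ
  have h2 : |σ| ≤ |θ| := by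
    have := hB2 (-(1/σ))
    rw [hy, hzrep] at this
    have e : y + (-(1/σ)) • (θ • x + σ • y) = (-(θ/σ)) • x := by
      match_scalars <;> field_simp <;> ring
    rw [e, norm_smul, hx] at this
    have : 1 ≤ |θ| / |σ| := by
      simpa [abs_div, neg_div] using this
    have hσpos : 0 < |σ| := abs_pos.mpr hσ
    calc |σ| = 1 * |σ| := by ring
      _ ≤ (|θ| / |σ|) * |σ| := by gcongr
      _ = |θ| := by field_simp
  -- |θ| ≤ 1 from x ⊣ y with t = σ/θ
  have h3 : |θ| ≤ 1 := by
    have := hB1 (σ/θ)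
    rw [hx] at this
    have e : x + (σ/θ) • y = (1/θ) • z := by
      rw [hzrep]; match_scalars <;> field_simp
    rw [e, norm_smul, hz] at this
    have hθpos : 0 < |θ| := abs_pos.mpr hθ
    rw [show ‖(1/θ:ℝ)‖ = 1/|θ| by simp [abs_div]] at this
    rw [mul_one, le_div_iff₀ hθpos, one_mul] at this
    exact this
  constructor <;> [skip; skip] <;> linarith
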